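/- Let X = Y_1×⋯×Y_k be a product of finite sets, let f, g : X → {−1,1}, let μ be a probability distribution on X with Corr_μ(f,g) ≥ δ, and let 0 < ε ≤ 1/2 and c ≥ 0. Suppose P : X → {−1,1} is a function that is constant on each member of some partition of X into at most 2^c cylinder intersections, and Pr_{x∼μ}[P(x) = f(x)] ≥ 1/2 + ε. Then δ ≤ 2^c · disc_{k,μ}(g) + (1 − 2ε); equivalently, 2^c ≥ (δ + 2ε − 1)/disc_{k,μ}(g). (This is the combinatorial core of the Generalized Discrepancy Method.) -/
import Mathlib


open scoped BigOperators

/-- A `k`-cylinder in the `i`-th dimension on a product `Y_1 × ⋯ × Y_k`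
(modelled as a dependent product): its value does not depend on the `i`-th
coordinate. -/
def IsCylinder {k : ℕ} {Y : Fin k → Type*} (i : Fin k) (ψ : (∀ j, Y j) → Bool) : Prop :=
  ∀ y y' : ∀ j, Y j, (∀ j, j ≠ i → y j = y' j) → ψ y = ψ y'

/-- A cylinder intersection: a pointwise product of cylinders in dimensions `1,…,k`. -/
def IsCylinderIntersection {k : ℕ} {Y : Fin k → Type*} (φ : (∀ j, Y j) → Bool) : Prop :=
  ∃ ψ : Fin k → ((∀ j, Y j) → Bool),
    (∀ i, IsCylinder i (ψ i)) ∧ ∀ y, φ y = decide (∀ i, ψ i y = true)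

/-- Interpret a boolean as the real `0` or `1`. -/
noncomputable def bval (b : Bool) : ℝ := if b then 1 else 0

/-- A probability distribution on a finite set. -/
def IsProbDist {D : Type*} [Fintype D] (μ : D → ℝ) : Prop :=
  (∀ x, 0 ≤ μ x) ∧ ∑ x, μ x = 1

/-- `disc_{k,μ}(g)`: the supremum over cylinder intersections `φ` of
`|E_{y∼μ}[g(y)φ(y)]|`. -/
noncomputable def disc {k : ℕ} {Y : Fin k → Type*} [∀ i, Fintype (Y i)]
    (μ : (∀ j, Y j) → ℝ) (g : (∀ j, Y j) → ℝ) : ℝ :=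
  sSup { t | ∃ φ, IsCylinderIntersection φ ∧ t = |∑ y, μ y * g y * bval (φ y)| }

/-- The combinatorial core of the Generalized Discrepancy Method.
If `Corr_μ(f,g) ≥ δ`, and `P` is a `{-1,1}`-valued function constant on each member
of a partition of the input space into at most `2^c` cylinder intersections, that
agrees with `f` with probability at least `1/2 + ε` under `μ`, then
`δ ≤ 2^c · disc_{k,μ}(g) + (1 − 2ε)`. -/
theorem statement1 (k : ℕ) (hk : 2 ≤ k) (Y : Fin k → Type) [∀ i, Fintype (Y i)]
    (f g : (∀ j, Y j) → ℝ)
    (hf : ∀ x, f x = 1 ∨ f x = -1) (hg : ∀ x, g x = 1 ∨ g x = -1)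
    (μ : (∀ j, Y j) → ℝ) (hμ : IsProbDist μ)
    (δ : ℝ) (hcorr : δ ≤ ∑ x, μ x * f x * g x)
    (ε c : ℝ) (hε0 : 0 < ε) (hε : ε ≤ 1 / 2) (hc : 0 ≤ c)
    (C : Finset ((∀ j, Y j) → Bool))
    (hCcyl : ∀ φ ∈ C, IsCylinderIntersection φ)
    (hCpart : ∀ x, ∃! φ, φ ∈ C ∧ φ x = true)
    (hCcard : (C.card : ℝ) ≤ (2 : ℝ) ^ c)
    (P : (∀ j, Y j) → ℝ) (hP : ∀ x, P x = 1 ∨ P x = -1)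
    (hPconst : ∀ φ ∈ C, ∀ x y, φ x = true → φ y = true → P x = P y)
    (hPcorrect : (1 : ℝ) / 2 + ε ≤ ∑ x, μ x * (if P x = f x then 1 else 0)) :
    δ ≤ (2 : ℝ) ^ c * disc μ g + (1 - 2 * ε) := by
  obtain ⟨hμ0, hμ1⟩ := hμ
  set S := { t | ∃ φ, IsCylinderIntersection φ ∧ t = |∑ y, μ y * g y * bval (φ y)| } with hS
  have hbval01 : ∀ b : Bool, 0 ≤ bval b ∧ bval b ≤ 1 := by
    intro b; cases b <;> simp [bval]
  have hbdd : BddAbove S := by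
    refine ⟨1, fun t ht => ?_⟩
    obtain ⟨φ, _, rfl⟩ := ht
    calc |∑ y, μ y * g y * bval (φ y)| ≤ ∑ y, |μ y * g y * bval (φ y)| :=
          Finset.abs_sum_le_sum_abs _ _
      _ ≤ ∑ y, μ y := by
          apply Finset.sum_le_sum
          intro y _
          rw [abs_mul, abs_mul, abs_of_nonneg (hμ0 y)]
          have h1 : |g y| = 1 := by rcases hg y with h | h <;> simp [h]
          have h2 : |bval (φ y)| ≤ 1 := by
            rw [abs_of_nonneg (hbval01 _).1]; exact (hbval01 _).2
          rw [h1, mul_one]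
          calc μ y * |bval (φ y)| ≤ μ y * 1 := mul_le_mul_of_nonneg_left h2 (hμ0 y)
            _ = μ y := mul_one _
      _ = 1 := hμ1
  have hterm : ∀ φ ∈ C, |∑ y, μ y * g y * P y * bval (φ y)| ≤ disc μ g := by
    intro φ hφ
    have hmem : |∑ y, μ y * g y * bval (φ y)| ∈ S := ⟨φ, hCcyl φ hφ, rfl⟩
    have hle : |∑ y, μ y * g y * bval (φ y)| ≤ disc μ g := le_csSup hbdd hmem
    by_cases hsup : ∃ x0, φ x0 = true
    · obtain ⟨x0, hx0⟩ := hsup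
      have heq : ∀ y, μ y * g y * P y * bval (φ y) = P x0 * (μ y * g y * bval (φ y)) := by
        intro y
        by_cases h : φ y = true
        · rw [hPconst φ hφ y x0 h hx0]; ring
        · simp only [Bool.not_eq_true] at h
          simp [bval, h]
      rw [Finset.sum_congr rfl (fun y _ => heq y), ← Finset.mul_sum, abs_mul]
      have : |P x0| = 1 := by rcases hP x0 with h | h <;> simp [h]
      rw [this, one_mul]; exact hle
    · push_neg at hsup
      have : ∀ y, μ y * g y * P y * bval (φ y) = 0 := by
        intro y
        have : φ y = false := by simpa using hsup y
        simp [bval, this]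
      rw [Finset.sum_eq_zero (fun y _ => this y)]
      simpa using le_trans (abs_nonneg _) hle
  have hXne : Nonempty (∀ j, Y j) := by
    by_contra h
    rw [not_nonempty_iff] at h
    rw [Finset.univ_eq_empty, Finset.sum_empty] at hμ1
    norm_num at hμ1
  have hCne : C.Nonempty := by
    obtain ⟨x⟩ := hXne
    obtain ⟨φ, ⟨hφC, _⟩, _⟩ := hCpart x
    exact ⟨φ, hφC⟩
  have hdisc0 : 0 ≤ disc μ g := by
    obtain ⟨φ, hφ⟩ := hCne
    exact le_trans (abs_nonneg _) (le_csSup hbdd ⟨φ, hCcyl φ hφ, rfl⟩)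
  have hpart : ∀ x, ∑ φ ∈ C, bval (φ x) = 1 := by
    intro x
    obtain ⟨φ0, ⟨hφ0C, hφ0x⟩, huniq⟩ := hCpart x
    rw [Finset.sum_eq_single φ0]
    · simp [bval, hφ0x]
    · intro φ hφ hne
      have : φ x = false := by
        by_contra h
        simp only [Bool.not_eq_false] at h
        exact hne (huniq φ ⟨hφ, h⟩)
      simp [bval, this]
    · intro h; exact absurd hφ0C h
  -- Bound A
  have hA : ∑ x, μ x * g x * P x ≤ (2 : ℝ) ^ c * disc μ g := by
    have hswap : ∑ x, μ x * g x * P x = ∑ φ ∈ C, ∑ x, μ x * g x * P x * bval (φ x) := by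
      rw [Finset.sum_comm]
      apply Finset.sum_congr rfl
      intro x _
      rw [← Finset.mul_sum, hpart x, mul_one]
    rw [hswap]
    calc ∑ φ ∈ C, ∑ x, μ x * g x * P x * bval (φ x)
        ≤ ∑ φ ∈ C, disc μ g := by
          apply Finset.sum_le_sum
          intro φ hφ
          exact le_trans (le_abs_self _) (hterm φ hφ)
      _ = C.card * disc μ g := by rw [Finset.sum_const, nsmul_eq_mul]
      _ ≤ (2 : ℝ) ^ c * disc μ g := mul_le_mul_of_nonneg_right hCcard hdisc0
  -- Bound B
  have hB : ∑ x, μ x * g x * (f x - P x) ≤ 1 - 2 * ε := by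
    have hpt : ∀ x, μ x * g x * (f x - P x) ≤ μ x * (2 - 2 * (if P x = f x then 1 else 0)) := by
      intro x
      by_cases h : P x = f x
      · simp [h]
      · simp only [h, if_neg h]
        have hgb : |g x| = 1 := by rcases hg x with h' | h' <;> simp [h']
        have : |f x - P x| = 2 := by
          rcases hf x with h1 | h1 <;> rcases hP x with h2 | h2 <;>
            simp [h1, h2] at h ⊢ <;> norm_num
        calc μ x * g x * (f x - P x) ≤ |μ x * g x * (f x - P x)| := le_abs_self _
          _ = μ x * (2 - 2 * 0) := by
              rw [abs_mul, abs_mul, abs_of_nonneg (hμ0 x), hgb, this]; ring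
      -- done
    calc ∑ x, μ x * g x * (f x - P x)
        ≤ ∑ x, μ x * (2 - 2 * (if P x = f x then 1 else 0)) :=
          Finset.sum_le_sum (fun x _ => hpt x)
      _ = 2 * (∑ x, μ x) - 2 * ∑ x, μ x * (if P x = f x then 1 else 0) := by
          rw [Finset.mul_sum, Finset.mul_sum, ← Finset.sum_sub_distrib]
          apply Finset.sum_congr rfl
          intro x _; ring
      _ ≤ 2 * 1 - 2 * (1 / 2 + ε) := by
          rw [hμ1]
          have := hPcorrect
          linarith
      _ = 1 - 2 * ε := by ring
  calc δ ≤ ∑ x, μ x * f x * g x := hcorr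
    _ = ∑ x, μ x * g x * P x + ∑ x, μ x * g x * (f x - P x) := by
        rw [← Finset.sum_add_distrib]
        apply Finset.sum_congr rfl
        intro x _; ring
    _ ≤ (2 : ℝ) ^ c * disc μ g + (1 - 2 * ε) := add_le_add hA hB
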